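/- Let x̲ ≤ x₁* < x₂* ≤ x̄ and let f₁, f₂ : [x̲, x̄] → ℝ be continuously differentiable with, for each j ∈ {1,2}, f_j'(x) > 0 for x < x_j* and f_j'(x) < 0 for x > x_j*. Suppose the ratio x ↦ f₁'(x)/f₂'(x) is strictly decreasing on (x₁*, x₂*). Then for every λ ∈ [0,1], the function Q(·,λ) : x ↦ λ·f₁(x) + (1−λ)·f₂(x) is quasi-concave on [x₁*, x₂*]; that is, for all x ≤ y ≤ z in [x₁*, x₂*], Q(y,λ) ≥ min( Q(x,λ), Q(z,λ) ). -/

import Mathlib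

open Set

/-- Proposition 11 (first part): if the derivative ratio f₁'/f₂' is strictly
decreasing on (x₁*, x₂*), then every convex combination λ·f₁ + (1−λ)·f₂ is
quasi-concave on [x₁*, x₂*]. -/
theorem convex_combination_quasiconcave
    (xlo xhi x₁s x₂s : ℝ) (h₁ : xlo ≤ x₁s) (h₁₂ : x₁s < x₂s) (h₂ : x₂s ≤ xhi)
    (f₁ f₂ f₁' f₂' : ℝ → ℝ)
    (hd₁ : ∀ x ∈ Icc xlo xhi, HasDerivWithinAt f₁ (f₁' x) (Icc xlo xhi) x)
    (hd₂ : ∀ x ∈ Icc xlo xhi, HasDerivWithinAt f₂ (f₂' x) (Icc xlo xhi) x)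
    (hc₁ : ContinuousOn f₁' (Icc xlo xhi)) (hc₂ : ContinuousOn f₂' (Icc xlo xhi))
    (hs₁p : ∀ x ∈ Icc xlo xhi, x < x₁s → 0 < f₁' x)
    (hs₁n : ∀ x ∈ Icc xlo xhi, x₁s < x → f₁' x < 0)
    (hs₂p : ∀ x ∈ Icc xlo xhi, x < x₂s → 0 < f₂' x)
    (hs₂n : ∀ x ∈ Icc xlo xhi, x₂s < x → f₂' x < 0)
    (hratio : StrictAntiOn (fun x => f₁' x / f₂' x) (Ioo x₁s x₂s)) :
    ∀ l ∈ Icc (0:ℝ) 1, ∀ x ∈ Icc x₁s x₂s, ∀ y ∈ Icc x₁s x₂s, ∀ z ∈ Icc x₁s x₂s,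
      x ≤ y → y ≤ z →
      min (l * f₁ x + (1 - l) * f₂ x) (l * f₁ z + (1 - l) * f₂ z) ≤
        l * f₁ y + (1 - l) * f₂ y := by
  intro l hl x hx y hy z hz hxy hyz
  set Q : ℝ → ℝ := fun t => l * f₁ t + (1 - l) * f₂ t with hQ
  set Q' : ℝ → ℝ := fun t => l * f₁' t + (1 - l) * f₂' t with hQ'
  have hsub : Icc x₁s x₂s ⊆ Icc xlo xhi := Icc_subset_Icc h₁ h₂
  -- derivative of Q at interior points
  have hQd : ∀ t ∈ Ioo x₁s x₂s, HasDerivAt Q (Q' t) t := by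
    intro t ht
    have htI : t ∈ Icc xlo xhi := hsub (Ioo_subset_Icc_self ht)
    have hnhds : Icc xlo xhi ∈ nhds t :=
      Icc_mem_nhds (lt_of_le_of_lt h₁ ht.1) (lt_of_lt_of_le ht.2 h₂)
    have h1 : HasDerivAt f₁ (f₁' t) t := (hd₁ t htI).hasDerivAt hnhds
    have h2 : HasDerivAt f₂ (f₂' t) t := (hd₂ t htI).hasDerivAt hnhds
    exact (h1.const_mul l).add (h2.const_mul (1 - l))
  -- continuity of Q on [x₁s, x₂s]
  have hQc : ContinuousOn Q (Icc x₁s x₂s) := by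
    have c1 : ContinuousOn f₁ (Icc xlo xhi) := fun t ht => (hd₁ t ht).continuousWithinAt
    have c2 : ContinuousOn f₂ (Icc xlo xhi) := fun t ht => (hd₂ t ht).continuousWithinAt
    exact ((continuousOn_const.mul (c1.mono hsub)).add
      (continuousOn_const.mul (c2.mono hsub)))
  -- single crossing: once Q' is ≤ 0, it stays < 0
  have cross : ∀ u ∈ Ioo x₁s x₂s, ∀ v ∈ Ioo x₁s x₂s, u < v → Q' u ≤ 0 → Q' v < 0 := by
    intro u hu v hv huv hQu
    have huI : u ∈ Icc xlo xhi := hsub (Ioo_subset_Icc_self hu)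
    have hvI : v ∈ Icc xlo xhi := hsub (Ioo_subset_Icc_self hv)
    have h2u : 0 < f₂' u := hs₂p u huI hu.2
    have h2v : 0 < f₂' v := hs₂p v hvI hv.2
    have h1u : f₁' u < 0 := hs₁n u huI hu.1
    have h1v : f₁' v < 0 := hs₁n v hvI hv.1
    have hr : f₁' v / f₂' v < f₁' u / f₂' u := hratio hu hv huv
    rcases eq_or_lt_of_le hl.1 with hl0 | hl0
    · exfalso
      have : Q' u = f₂' u := by simp [hQ', ← hl0]
      linarith [this ▸ hQu]
    · have hru : f₁' u = (f₁' u / f₂' u) * f₂' u := by field_simp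
      have hrv : f₁' v = (f₁' v / f₂' v) * f₂' v := by field_simp
      have hcoefu : l * (f₁' u / f₂' u) + (1 - l) ≤ 0 := by
        have : l * ((f₁' u / f₂' u) * f₂' u) + (1 - l) * f₂' u ≤ 0 := by
          rw [← hru]; exact hQu
        nlinarith
      have hcoefv : l * (f₁' v / f₂' v) + (1 - l) < 0 := by nlinarith
      have hneg := mul_neg_of_neg_of_pos hcoefv h2v
      simp only [hQ']
      nlinarith [hrv]
  -- main argument
  by_contra hcon
  push_neg at hcon
  rw [lt_min_iff] at hcon
  obtain ⟨hQx, hQz⟩ := hcon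
  have hxy' : x < y := by
    rcases lt_or_eq_of_le hxy with h | h
    · exact h
    · exfalso; rw [h] at hQx; exact lt_irrefl _ hQx
  have hyz' : y < z := by
    rcases lt_or_eq_of_le hyz with h | h
    · exact h
    · exfalso; rw [← h] at hQz; exact lt_irrefl _ hQz
  -- MVT on [x, y]
  obtain ⟨u, hu, hu'⟩ := exists_hasDerivAt_eq_slope Q Q' hxy'
    (hQc.mono (Icc_subset_Icc hx.1 hy.2))
    (fun t ht => hQd t ⟨lt_of_le_of_lt hx.1 ht.1, lt_of_lt_of_le ht.2 hy.2⟩)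
  obtain ⟨v, hv, hv'⟩ := exists_hasDerivAt_eq_slope Q Q' hyz'
    (hQc.mono (Icc_subset_Icc hy.1 hz.2))
    (fun t ht => hQd t ⟨lt_of_le_of_lt hy.1 ht.1, lt_of_lt_of_le ht.2 hz.2⟩)
  have hQu : Q' u < 0 := by
    rw [hu']
    apply div_neg_of_neg_of_pos
    · simpa [hQ] using sub_neg.mpr hQx
    · linarith [hxy']
  have hQv : 0 < Q' v := by
    rw [hv']
    apply div_pos
    · simpa [hQ] using sub_pos.mpr hQz
    · linarith [hyz']
  have huIoo : u ∈ Ioo x₁s x₂s := ⟨lt_of_le_of_lt hx.1 hu.1, lt_of_lt_of_le hu.2 hy.2⟩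
  have hvIoo : v ∈ Ioo x₁s x₂s := ⟨lt_of_le_of_lt hy.1 hv.1, lt_of_lt_of_le hv.2 hz.2⟩
  have := cross u huIoo v hvIoo (lt_trans hu.2 hv.1) hQu.le
  linarith
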